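/- There exists a constant C > 0 such that for every integer t ≥ 1, Σ_{z∈ℤ} Δ(z,t)² ≤ C·t^{−3/2}. -/

import Mathlib

noncomputable section

namespace KPZpaper

/-- Transition probability of the simple symmetric random walk on ℤ:
`p(x,t) = 2^{-t} C(t,(t+x)/2)` if `|x| ≤ t` and `x + t` is even, `0` otherwise. -/
def rwP (x : ℤ) (t : ℕ) : ℝ :=
  if |x| ≤ (t : ℤ) ∧ (x + t) % 2 = 0 then
    ((2 : ℝ) ^ t)⁻¹ * (Nat.choose t ((((t : ℤ) + x).toNat) / 2)) else 0

/-- `Δ(x,t) = p(x+1,t) - p(x-1,t)`. -/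
def rwDelta (x : ℤ) (t : ℕ) : ℝ := rwP (x + 1) t - rwP (x - 1) t

/-- Sum of squares of binomial coefficients (Vandermonde). -/
lemma sumSq (n : ℕ) : ∑ k ∈ Finset.range (n+1), (n.choose k)^2 = (2*n).choose n := by
  have h := Nat.add_choose_eq n n n
  rw [Finset.Nat.sum_antidiagonal_eq_sum_range_succ_mk] at h
  rw [two_mul, h]
  refine Finset.sum_congr rfl fun i hi => ?_
  rw [Finset.mem_range, Nat.lt_succ_iff] at hi
  simp only
  rw [sq, Nat.choose_symm hi]

/-- Off-center Vandermonde. -/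
lemma sumOff (n : ℕ) :
    ∑ i ∈ Finset.range (n+1), n.choose (i+1) * n.choose i = (2*n).choose (n+1) := by
  have h := Nat.add_choose_eq n n (n+1)
  rw [Finset.Nat.sum_antidiagonal_eq_sum_range_succ_mk] at h
  have h2 := Finset.sum_range_succ'
    (fun k => n.choose (k, n + 1 - k).1 * n.choose (k, n + 1 - k).2) (n+1)
  rw [two_mul, h, h2]
  simp only
  rw [Nat.sub_zero, Nat.choose_succ_self, mul_zero, add_zero]
  refine Finset.sum_congr rfl fun i hi => ?_
  rw [Finset.mem_range, Nat.lt_succ_iff] at hi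
  rw [Nat.succ_sub_succ, Nat.choose_symm hi]

/-- Central binomial upper bound `√(n+1) · C(2n,n) ≤ 4^n`. -/
lemma cb_bound (n : ℕ) :
    Real.sqrt (n+1) * (Nat.centralBinom n : ℝ) ≤ 4 ^ n := by
  induction n with
  | zero => simp [Nat.centralBinom]
  | succ n ih =>
    have hrec : ((n:ℝ)+1) * (Nat.centralBinom (n+1) : ℝ)
        = 2*(2*(n:ℝ)+1) * (Nat.centralBinom n : ℝ) := by
      have := Nat.succ_mul_centralBinom_succ n
      have h2 : (((n+1) * Nat.centralBinom (n+1) : ℕ) : ℝ)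
          = ((2 * (2*n+1) * Nat.centralBinom n : ℕ) : ℝ) := by
        exact_mod_cast congrArg (Nat.cast : ℕ → ℝ) this
      push_cast at h2
      linarith
    have key : (2*(n:ℝ)+1) * Real.sqrt ((n:ℝ)+2) ≤ 2*((n:ℝ)+1) * Real.sqrt ((n:ℝ)+1) := by
      have e1 : (2*(n:ℝ)+1) * Real.sqrt ((n:ℝ)+2) = Real.sqrt ((2*(n:ℝ)+1)^2 * ((n:ℝ)+2)) := by
        rw [Real.sqrt_mul (by positivity), Real.sqrt_sq (by positivity)]
      have e2 : 2*((n:ℝ)+1) * Real.sqrt ((n:ℝ)+1) = Real.sqrt ((2*((n:ℝ)+1))^2 * ((n:ℝ)+1)) := by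
        rw [Real.sqrt_mul (by positivity), Real.sqrt_sq (by positivity)]
      rw [e1, e2]
      apply Real.sqrt_le_sqrt
      nlinarith [Nat.cast_nonneg (α := ℝ) n]
    have hpos : (0:ℝ) < (n:ℝ) + 1 := by positivity
    rw [← mul_le_mul_iff_right₀ hpos]
    have lhs_eq : ((n:ℝ)+1) * (Real.sqrt ((n:ℝ)+1+1) * (Nat.centralBinom (n+1) : ℝ))
        = Real.sqrt ((n:ℝ)+2) * (2*(2*(n:ℝ)+1) * (Nat.centralBinom n : ℝ)) := by
      rw [← hrec]; ring_nf
    have cbn : (0:ℝ) ≤ (Nat.centralBinom n : ℝ) := Nat.cast_nonneg _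
    calc ((n:ℝ)+1) * (Real.sqrt (↑(n+1)+1) * (Nat.centralBinom (n+1) : ℝ))
        = Real.sqrt ((n:ℝ)+2) * (2*(2*(n:ℝ)+1) * (Nat.centralBinom n : ℝ)) := by
          push_cast; linarith [lhs_eq]
      _ = 2 * ((2*(n:ℝ)+1) * Real.sqrt ((n:ℝ)+2)) * (Nat.centralBinom n : ℝ) := by ring
      _ ≤ 2 * (2*((n:ℝ)+1) * Real.sqrt ((n:ℝ)+1)) * (Nat.centralBinom n : ℝ) := by
          apply mul_le_mul_of_nonneg_right _ cbn
          apply mul_le_mul_of_nonneg_left key (by norm_num)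
      _ = 4*((n:ℝ)+1) * (Real.sqrt ((n:ℝ)+1) * (Nat.centralBinom n : ℝ)) := by ring
      _ ≤ 4*((n:ℝ)+1) * 4^n := by
          apply mul_le_mul_of_nonneg_left _ (by positivity)
          exact_mod_cast ih
      _ = ((n:ℝ)+1) * 4^(n+1) := by ring

lemma rwP_eval1 (t k : ℕ) (hk : k ≤ t + 1) :
    rwP (2*(k:ℤ) - t) t = ((2:ℝ)^t)⁻¹ * (t.choose k : ℝ) := by
  unfold rwP
  simp only [abs_le]
  by_cases h : k ≤ t
  · rw [if_pos ⟨by constructor <;> omega, by omega⟩]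
    have h1 : ((t:ℤ) + (2*(k:ℤ) - t)).toNat = 2*k := by omega
    rw [h1, Nat.mul_div_cancel_left k (by norm_num)]
  · have hk1 : k = t + 1 := by omega
    rw [if_neg (by omega), hk1, Nat.choose_succ_self]
    simp

lemma rwP_eval2 (t k : ℕ) (hk : k ≤ t + 1) :
    rwP (2*(k:ℤ) - t - 2) t
      = if k = 0 then 0 else ((2:ℝ)^t)⁻¹ * (t.choose (k-1) : ℝ) := by
  unfold rwP
  simp only [abs_le]
  by_cases h : k = 0
  · rw [if_pos h, if_neg (by omega)]
  · rw [if_neg h, if_pos ⟨by constructor <;> omega, by omega⟩]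
    have h1 : ((t:ℤ) + (2*(k:ℤ) - t - 2)).toNat = 2*(k-1) := by omega
    rw [h1, Nat.mul_div_cancel_left (k-1) (by norm_num)]

lemma tsum_eq_finsum (t : ℕ) :
    (∑' z : ℤ, rwDelta z t ^ 2)
      = ∑ k ∈ Finset.range (t+2), rwDelta (2*(k:ℤ) - t - 1) t ^ 2 := by
  have himg := Finset.sum_image (f := fun z : ℤ => rwDelta z t ^ 2)
    (s := Finset.range (t+2)) (g := fun k : ℕ => 2*(k:ℤ) - t - 1)
    (fun a _ b _ h => by simpa using h)
  rw [← himg]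
  apply tsum_eq_sum
  intro z hz
  have hdz : rwDelta z t = 0 := by
    by_cases hpar : (z + t) % 2 = 0
    · unfold rwDelta rwP
      rw [if_neg (fun hc => by omega), if_neg (fun hc => by omega)]
      ring
    · by_cases hb : -(t:ℤ) - 1 ≤ z ∧ z ≤ t + 1
      · exact absurd (Finset.mem_image.mpr ⟨(z + t + 1).toNat / 2,
          Finset.mem_range.mpr (by omega), by omega⟩) hz
      · unfold rwDelta rwP
        rw [if_neg (fun hc => by rw [abs_le] at hc; omega),
          if_neg (fun hc => by rw [abs_le] at hc; omega)]
        ring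
  rw [hdz]; ring

lemma finsum_eval (t : ℕ) :
    ∑ k ∈ Finset.range (t+2), rwDelta (2*(k:ℤ) - t - 1) t ^ 2
      = ((2:ℝ)^t)⁻¹^2 * (2*((2*t).choose t : ℝ) - 2*((2*t).choose (t+1) : ℝ)) := by
  have hterm : ∀ k ∈ Finset.range (t+2), rwDelta (2*(k:ℤ)-t-1) t ^ 2
      = ((2:ℝ)^t)⁻¹^2 * ((t.choose k : ℝ)
        - (if k = 0 then 0 else (t.choose (k-1) : ℝ)))^2 := by
    intro k hk
    rw [Finset.mem_range] at hk
    have e1 : (2*(k:ℤ)-t-1) + 1 = 2*(k:ℤ) - t := by ring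
    have e2 : (2*(k:ℤ)-t-1) - 1 = 2*(k:ℤ) - t - 2 := by ring
    unfold rwDelta
    rw [e1, e2, rwP_eval1 t k (by omega), rwP_eval2 t k (by omega)]
    split_ifs with h
    · ring
    · ring
  rw [Finset.sum_congr rfl hterm, ← Finset.mul_sum]
  congr 1
  have expand : ∀ k ∈ Finset.range (t+2),
      ((t.choose k : ℝ) - (if k = 0 then 0 else (t.choose (k-1) : ℝ)))^2
      = (t.choose k : ℝ)^2 + (if k = 0 then 0 else (t.choose (k-1) : ℝ))^2
        - 2*((t.choose k : ℝ) * (if k = 0 then 0 else (t.choose (k-1) : ℝ))) := by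
    intro k _; ring
  rw [Finset.sum_congr rfl expand, Finset.sum_sub_distrib, Finset.sum_add_distrib,
    ← Finset.mul_sum]
  have h1 : ∑ k ∈ Finset.range (t+2), (t.choose k : ℝ)^2 = ((2*t).choose t : ℝ) := by
    rw [Finset.sum_range_succ, Nat.choose_succ_self, Nat.cast_zero,
      zero_pow (two_ne_zero), add_zero]
    exact_mod_cast sumSq t
  have h2 : ∑ k ∈ Finset.range (t+2),
      (if k = 0 then (0:ℝ) else (t.choose (k-1) : ℝ))^2 = ((2*t).choose t : ℝ) := by
    rw [Finset.sum_range_succ']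
    norm_num
    exact_mod_cast sumSq t
  have h3 : ∑ k ∈ Finset.range (t+2),
      (t.choose k : ℝ) * (if k = 0 then (0:ℝ) else (t.choose (k-1) : ℝ))
      = ((2*t).choose (t+1) : ℝ) := by
    rw [Finset.sum_range_succ']
    norm_num
    exact_mod_cast sumOff t
  rw [h1, h2, h3]
  ring

/-- There is a constant `C > 0` such that for every integer `t ≥ 1`,
`Σ_{z∈ℤ} Δ(z,t)² ≤ C t^{-3/2}`. -/
theorem rwDelta_sq_sum_bound :
    ∃ C : ℝ, 0 < C ∧ ∀ t : ℕ, 1 ≤ t →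
      (∑' z : ℤ, rwDelta z t ^ 2) ≤ C * (t : ℝ) ^ (-(3 / 2) : ℝ) := by
  refine ⟨2, by norm_num, fun t ht => ?_⟩
  rw [tsum_eq_finsum, finsum_eval]
  set N : ℝ := ((2*t).choose t : ℝ) with hN
  set M : ℝ := ((2*t).choose (t+1) : ℝ) with hM
  have ht0 : (0:ℝ) < t := by exact_mod_cast ht
  -- relation between N and M
  have hNM : M * ((t:ℝ)+1) = N * t := by
    have h := Nat.choose_succ_right_eq (2*t) t
    have h2 : 2*t - t = t := by omega
    rw [h2] at h
    have h3 : (((2*t).choose (t+1) * (t+1) : ℕ) : ℝ)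
        = (((2*t).choose t * t : ℕ) : ℝ) := congrArg (Nat.cast : ℕ → ℝ) h
    push_cast at h3
    rw [hN, hM]
    linarith
  have hdiff : N - M = N / ((t:ℝ)+1) := by
    have hpos : (0:ℝ) < (t:ℝ)+1 := by positivity
    field_simp
    linarith [hNM]
  -- central binomial bound
  have hcb : Real.sqrt ((t:ℝ)+1) * N ≤ 4 ^ t := by
    have := cb_bound t
    rw [Nat.centralBinom_eq_two_mul_choose] at this
    exact_mod_cast this
  -- rewrite the rpow
  have hs : (0:ℝ) < Real.sqrt t := Real.sqrt_pos.mpr ht0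
  have hrpow : (t : ℝ) ^ (-(3 / 2) : ℝ) = ((t:ℝ) * Real.sqrt t)⁻¹ := by
    rw [Real.rpow_neg (le_of_lt ht0)]
    congr 1
    have h32 : (3/2 : ℝ) = 1 + 1/2 := by norm_num
    rw [h32, Real.rpow_add ht0, Real.rpow_one, ← Real.sqrt_eq_rpow]
  rw [hrpow]
  have hNnn : (0:ℝ) ≤ N := Nat.cast_nonneg _
  have h4 : (0:ℝ) < 4 ^ t := by positivity
  have hsa : Real.sqrt t ≤ Real.sqrt ((t:ℝ)+1) := Real.sqrt_le_sqrt (by linarith)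
  have hpow2 : (((2:ℝ)^t)⁻¹)^2 = ((4:ℝ)^t)⁻¹ := by
    rw [show (4:ℝ) = 2*2 by norm_num, mul_pow, sq, mul_inv]
  rw [hpow2, ← div_eq_mul_inv]
  have hts : (0:ℝ) < (t:ℝ) * Real.sqrt t := by positivity
  have ht1 : (0:ℝ) < (t:ℝ) + 1 := by positivity
  have key : N * ((t:ℝ) * Real.sqrt t) ≤ 4^t * ((t:ℝ)+1) := by
    calc N * ((t:ℝ) * Real.sqrt t)
        ≤ N * (((t:ℝ)+1) * Real.sqrt ((t:ℝ)+1)) := by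
          apply mul_le_mul_of_nonneg_left _ hNnn
          apply mul_le_mul (by linarith) hsa (Real.sqrt_nonneg _) (by linarith)
      _ = ((t:ℝ)+1) * (Real.sqrt ((t:ℝ)+1) * N) := by ring
      _ ≤ ((t:ℝ)+1) * 4^t := mul_le_mul_of_nonneg_left hcb (by positivity)
      _ = 4^t * ((t:ℝ)+1) := by ring
  have lhs_eq : ((4:ℝ)^t)⁻¹ * (2*N - 2*M) = (2*N) / (4^t * ((t:ℝ)+1)) := by
    rw [eq_div_iff (by positivity)]
    field_simp
    nlinarith [hNM]
  rw [lhs_eq, div_le_div_iff₀ (by positivity) hts]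
  nlinarith [key]

end KPZpaper
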